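/- Let n be a natural number with n ≥ 3 and let z ∈ [0,n] be real. Define y = ⌈z⌉ if z ≤ n/2 and y = ⌊z⌋ if z > n/2. Then n·H(y/n) ≥ n·H(z/n) - log 5, where H is the binary entropy function. -/
import Mathlib

noncomputable def binEnt (p : ℝ) : ℝ := -p * Real.log p - (1 - p) * Real.log (1 - p)

lemma binEnt_eq (p : ℝ) : binEnt p = Real.binEntropy p := by
  simp [binEnt, Real.binEntropy, Real.log_inv]; ring

lemma binEnt_lip {a b : ℝ} (ha : a ∈ Set.Icc (1/6 : ℝ) (5/6))
    (hb : b ∈ Set.Icc (1/6 : ℝ) (5/6)) :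
    |Real.binEntropy b - Real.binEntropy a| ≤ Real.log 5 * |b - a| := by
  have key : ∀ x ∈ Set.Icc (1/6 : ℝ) (5/6), ‖deriv Real.binEntropy x‖ ≤ Real.log 5 := by
    intro x hx
    obtain ⟨hx1, hx2⟩ := hx
    rw [Real.deriv_binEntropy, Real.norm_eq_abs, abs_le]
    have h5 : Real.log 5 = Real.log (5/6) - Real.log (1/6) := by
      rw [Real.log_div (by norm_num) (by norm_num), Real.log_div (by norm_num) (by norm_num)]
      simp
    constructor
    · have h1 : Real.log (1/6) ≤ Real.log (1 - x) :=
        Real.log_le_log (by norm_num) (by linarith)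
      have h2 : Real.log x ≤ Real.log (5/6) :=
        Real.log_le_log (by linarith) (by linarith)
      linarith
    · have h1 : Real.log (1 - x) ≤ Real.log (5/6) :=
        Real.log_le_log (by linarith) (by linarith)
      have h2 : Real.log (1/6) ≤ Real.log x :=
        Real.log_le_log (by norm_num) hx1
      linarith
  have hdiff : ∀ x ∈ Set.Icc (1/6 : ℝ) (5/6), DifferentiableAt ℝ Real.binEntropy x := by
    intro x hx
    exact Real.differentiableAt_binEntropy (by intro h; rw [h] at hx; simp at hx; linarith [hx.1])
      (by intro h; rw [h] at hx; simp at hx; linarith [hx.2])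
  have := (convex_Icc (1/6 : ℝ) (5/6)).norm_image_sub_le_of_norm_deriv_le hdiff key ha hb
  simpa [Real.norm_eq_abs] using this

theorem entropy_rounding (n : ℕ) (hn : 3 ≤ n) (z : ℝ) (hz : z ∈ Set.Icc (0:ℝ) n) :
    (n : ℝ) * binEnt ((if z ≤ n / 2 then ((⌈z⌉ : ℤ) : ℝ) else ((⌊z⌋ : ℤ) : ℝ)) / n)
      ≥ (n : ℝ) * binEnt (z / n) - Real.log 5 := by
  obtain ⟨hz0, hzn⟩ := hz
  have hN : (0:ℝ) < n := by exact_mod_cast Nat.lt_of_lt_of_le (by norm_num) hn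
  have hN3 : (3:ℝ) ≤ n := by exact_mod_cast hn
  have hlog5 : (0:ℝ) ≤ Real.log 5 := Real.log_nonneg (by norm_num)
  simp only [binEnt_eq]
  by_cases hc : z ≤ n / 2
  · simp only [if_pos hc]
    set y : ℝ := ((⌈z⌉ : ℤ) : ℝ) with hy
    have hyz : z ≤ y := Int.le_ceil z
    have hyz1 : y < z + 1 := Int.ceil_lt_add_one z
    by_cases hy2 : y ≤ n / 2
    · -- monotone case
      have hmem1 : z / n ∈ Set.Icc (0:ℝ) 2⁻¹ := by
        constructor
        · positivity
        · rw [div_le_iff₀ hN]; linarith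
      have hmem2 : y / n ∈ Set.Icc (0:ℝ) 2⁻¹ := by
        constructor
        · apply div_nonneg _ hN.le; linarith
        · rw [div_le_iff₀ hN]; linarith
      have hle : Real.binEntropy (z / n) ≤ Real.binEntropy (y / n) := by
        apply Real.binEntropy_strictMonoOn.monotoneOn hmem1 hmem2
        exact div_le_div_of_nonneg_right hyz hN.le
      nlinarith
    · -- straddle case
      push_neg at hy2
      have hz' : (n:ℝ)/2 - 1 < z := by linarith
      have hmem1 : z / n ∈ Set.Icc (1/6 : ℝ) (5/6) := by
        constructor
        · rw [le_div_iff₀ hN]; linarith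
        · rw [div_le_iff₀ hN]; linarith
      have hmem2 : y / n ∈ Set.Icc (1/6 : ℝ) (5/6) := by
        constructor
        · rw [le_div_iff₀ hN]; linarith
        · rw [div_le_iff₀ hN]; linarith
      have hkey := binEnt_lip hmem1 hmem2
      have habs : |y / n - z / n| ≤ 1 / n := by
        rw [div_sub_div_same, abs_div, abs_of_pos hN, div_le_div_iff₀ hN hN]
        rw [abs_of_nonneg (by linarith)]
        nlinarith
      have h2 : Real.binEntropy (z/n) - Real.binEntropy (y/n) ≤ Real.log 5 * (1/n) := by
        have := neg_abs_le (Real.binEntropy (y / n) - Real.binEntropy (z / n))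
        nlinarith [mul_le_mul_of_nonneg_left habs hlog5]
      have : Real.log 5 * (1/n) * n = Real.log 5 := by field_simp
      nlinarith
  · simp only [if_neg hc]
    push_neg at hc
    set y : ℝ := ((⌊z⌋ : ℤ) : ℝ) with hy
    have hyz : y ≤ z := Int.floor_le z
    have hyz1 : z < y + 1 := Int.lt_floor_add_one z
    by_cases hy2 : (n:ℝ) / 2 ≤ y
    · -- antitone case
      have hmem1 : z / n ∈ Set.Icc (2⁻¹:ℝ) 1 := by
        constructor
        · rw [le_div_iff₀ hN]; linarith
        · rw [div_le_one hN]; linarith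
      have hmem2 : y / n ∈ Set.Icc (2⁻¹:ℝ) 1 := by
        constructor
        · rw [le_div_iff₀ hN]; linarith
        · rw [div_le_one hN]; linarith
      have hle : Real.binEntropy (z / n) ≤ Real.binEntropy (y / n) := by
        apply Real.binEntropy_strictAntiOn.antitoneOn hmem2 hmem1
        exact div_le_div_of_nonneg_right hyz hN.le
      nlinarith
    · -- straddle case
      push_neg at hy2
      have hmem1 : z / n ∈ Set.Icc (1/6 : ℝ) (5/6) := by
        constructor
        · rw [le_div_iff₀ hN]; linarith
        · rw [div_le_iff₀ hN]; linarith
      have hmem2 : y / n ∈ Set.Icc (1/6 : ℝ) (5/6) := by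
        constructor
        · rw [le_div_iff₀ hN]; linarith
        · rw [div_le_iff₀ hN]; linarith
      have hkey := binEnt_lip hmem1 hmem2
      have habs : |y / n - z / n| ≤ 1 / n := by
        rw [div_sub_div_same, abs_div, abs_of_pos hN, div_le_div_iff₀ hN hN]
        rw [abs_of_nonpos (by linarith)]
        nlinarith
      have h2 : Real.binEntropy (z/n) - Real.binEntropy (y/n) ≤ Real.log 5 * (1/n) := by
        have := neg_abs_le (Real.binEntropy (y / n) - Real.binEntropy (z / n))
        nlinarith [mul_le_mul_of_nonneg_left habs hlog5]
      have : Real.log 5 * (1/n) * n = Real.log 5 := by field_simp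
      nlinarith
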